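/- Let −A generate a strongly continuous semigroup on a Banach space X and let C : D(A) → Y satisfy, for some constants M, M'', ω, τ > 0 with M·M''·e^{−ωτ} < 1: ‖x‖² ≤ M ∫₀^∞ ‖C e^{−ωt} T(t)x‖²_Y dt and ∫₀^∞ ‖C e^{−ωt}T(t)T(τ)x‖²_Y dt ≤ M''‖x‖² for all x ∈ D(A). Then C is exactly observable in time τ: there is m > 0 with m²‖x‖² ≤ ∫₀^τ ‖C T(t)x‖²_Y dt for all x ∈ D(A). -/

import Mathlib

open MeasureTheory

/-- Finite-time exact observability from a weighted infinite-time estimate: if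
`‖x‖² ≤ M ∫₀^∞ ‖C e^{-ωt} T(t)x‖² dt` and
`∫₀^∞ ‖C e^{-ωt} T(t) T(τ)x‖² dt ≤ M''‖x‖²` with `M·M''·e^{-ωτ} < 1`, then `C` is
exactly observable in time `τ`. -/
theorem stmt12 {X Y : Type*} [NormedAddCommGroup X] [NormedSpace ℂ X] [CompleteSpace X]
    [NormedAddCommGroup Y] [NormedSpace ℂ Y]
    (T : ℝ → X →L[ℂ] X)
    (hT0 : T 0 = 1)
    (hTadd : ∀ t s : ℝ, 0 ≤ t → 0 ≤ s → T (t + s) = (T t).comp (T s))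
    (hTcont : ∀ x : X, ContinuousOn (fun t => T t x) (Set.Ici 0))
    (D : Set X) (hTD : ∀ x ∈ D, ∀ t : ℝ, 0 ≤ t → T t x ∈ D)
    (C : X → Y)
    (M M'' ω τ : ℝ) (hM : 0 < M) (hM'' : 0 < M'') (hω : 0 < ω) (hτ : 0 < τ)
    (hsmall : M * M'' * Real.exp (-ω * τ) < 1)
    (hint : ∀ x ∈ D,
      IntegrableOn (fun t => Real.exp (-2 * ω * t) * ‖C (T t x)‖ ^ 2) (Set.Ioi 0))
    (h1 : ∀ x ∈ D,
      ‖x‖ ^ 2 ≤ M * ∫ t in Set.Ioi (0:ℝ), Real.exp (-2 * ω * t) * ‖C (T t x)‖ ^ 2)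
    (h2 : ∀ x ∈ D,
      (∫ t in Set.Ioi (0:ℝ), Real.exp (-2 * ω * t) * ‖C (T t (T τ x))‖ ^ 2)
        ≤ M'' * ‖x‖ ^ 2) :
    ∃ m : ℝ, 0 < m ∧ ∀ x ∈ D, m ^ 2 * ‖x‖ ^ 2 ≤ ∫ t in (0:ℝ)..τ, ‖C (T t x)‖ ^ 2 := by
  have hexp : Real.exp (-2 * ω * τ) ≤ Real.exp (-ω * τ) :=
    Real.exp_le_exp.2 (by nlinarith)
  set c := (1 - M * M'' * Real.exp (-ω * τ)) / M with hc
  have hcpos : 0 < c := div_pos (by linarith) hM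
  refine ⟨Real.sqrt c, Real.sqrt_pos.2 hcpos, ?_⟩
  intro x hx
  rw [Real.sq_sqrt hcpos.le]
  set g : ℝ → ℝ := fun t => Real.exp (-2 * ω * t) * ‖C (T t x)‖ ^ 2 with hgdef
  set f : ℝ → ℝ := fun t => ‖C (T t x)‖ ^ 2 with hfdef
  have hgint : IntegrableOn g (Set.Ioi 0) := hint x hx
  have hgIoc : IntegrableOn g (Set.Ioc 0 τ) := hgint.mono_set Set.Ioc_subset_Ioi_self
  have hgIoi : IntegrableOn g (Set.Ioi τ) := hgint.mono_set (Set.Ioi_subset_Ioi hτ.le)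
  -- split the integral
  have hsplit : (∫ t in Set.Ioi (0:ℝ), g t)
      = (∫ t in Set.Ioc 0 τ, g t) + ∫ t in Set.Ioi τ, g t := by
    rw [← setIntegral_union (Set.Ioc_disjoint_Ioi le_rfl) measurableSet_Ioi hgIoc hgIoi,
      Set.Ioc_union_Ioi_eq_Ioi hτ.le]
  -- tail estimate via change of variables
  have hcov : (∫ s in Set.Ioi (0:ℝ), g (s + τ)) = ∫ t in Set.Ioi τ, g t := by
    have h := (measurePreserving_add_right volume τ).setIntegral_preimage_emb
      (measurableEmbedding_addRight τ) g (Set.Ioi τ)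
    have hpre : (fun s : ℝ => s + τ) ⁻¹' Set.Ioi τ = Set.Ioi 0 := by
      ext s; simp
    rwa [hpre] at h
  have htail : (∫ t in Set.Ioi τ, g t)
      ≤ Real.exp (-2 * ω * τ) * (M'' * ‖x‖ ^ 2) := by
    rw [← hcov]
    have heq : (∫ s in Set.Ioi (0:ℝ), g (s + τ))
        = Real.exp (-2 * ω * τ) *
          ∫ s in Set.Ioi (0:ℝ), Real.exp (-2 * ω * s) * ‖C (T s (T τ x))‖ ^ 2 := by
      rw [← integral_const_mul]
      refine setIntegral_congr_fun measurableSet_Ioi fun s hs => ?_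
      have hs0 : (0:ℝ) ≤ s := le_of_lt hs
      have hTst : T (s + τ) x = T s (T τ x) := by
        rw [hTadd s τ hs0 hτ.le]; rfl
      simp only [hgdef, hTst]
      rw [show -2 * ω * (s + τ) = -2 * ω * τ + -2 * ω * s by ring, Real.exp_add, mul_assoc]
    rw [heq]
    have := h2 x hx
    have hexppos : 0 < Real.exp (-2 * ω * τ) := Real.exp_pos _
    nlinarith [this, hexppos]
  -- front estimate: integrability of f on Ioc 0 τ
  have hfmeas : AEStronglyMeasurable f (volume.restrict (Set.Ioc 0 τ)) := by
    have hfg : f = fun t => Real.exp (2 * ω * t) * g t := by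
      funext t
      simp only [hfdef, hgdef]
      rw [← mul_assoc, ← Real.exp_add, show 2 * ω * t + -2 * ω * t = 0 by ring,
        Real.exp_zero, one_mul]
    rw [hfg]
    exact ((Real.continuous_exp.comp (by continuity)).aestronglyMeasurable).mul
      hgIoc.aestronglyMeasurable
  have hfIoc : IntegrableOn f (Set.Ioc 0 τ) := by
    refine Integrable.mono' (hgIoc.const_mul (Real.exp (2 * ω * τ))) hfmeas ?_
    filter_upwards [ae_restrict_mem measurableSet_Ioc] with t ht
    have ht0 : 0 < t := ht.1
    have htτ : t ≤ τ := ht.2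
    have hgnn : 0 ≤ g t := by positivity
    have hfg : f t = Real.exp (2 * ω * t) * g t := by
      simp only [hfdef, hgdef]
      rw [← mul_assoc, ← Real.exp_add, show 2 * ω * t + -2 * ω * t = 0 by ring,
        Real.exp_zero, one_mul]
    have hfnn : 0 ≤ f t := by positivity
    rw [Real.norm_of_nonneg hfnn, hfg]
    exact mul_le_mul_of_nonneg_right (Real.exp_le_exp.2 (by nlinarith)) hgnn
  have hfront : (∫ t in Set.Ioc 0 τ, g t) ≤ ∫ t in Set.Ioc 0 τ, f t := by
    refine setIntegral_mono_on hgIoc hfIoc measurableSet_Ioc fun t ht => ?_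
    have ht0 : 0 < t := ht.1
    have hfnn : 0 ≤ f t := by positivity
    have hle : Real.exp (-2 * ω * t) ≤ 1 := by
      rw [Real.exp_le_one_iff]; nlinarith
    calc g t = Real.exp (-2 * ω * t) * f t := rfl
      _ ≤ 1 * f t := mul_le_mul_of_nonneg_right hle hfnn
      _ = f t := one_mul _
  have hival : (∫ t in (0:ℝ)..τ, ‖C (T t x)‖ ^ 2) = ∫ t in Set.Ioc 0 τ, f t := by
    rw [intervalIntegral.integral_of_le hτ.le]
  -- combine
  have hx1 := h1 x hx
  have hxsq : (0:ℝ) ≤ ‖x‖ ^ 2 := by positivity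
  have hkey : ‖x‖ ^ 2 ≤ M * ((∫ t in Set.Ioc 0 τ, f t) + Real.exp (-ω * τ) * (M'' * ‖x‖ ^ 2)) := by
    have : (∫ t in Set.Ioi (0:ℝ), g t)
        ≤ (∫ t in Set.Ioc 0 τ, f t) + Real.exp (-ω * τ) * (M'' * ‖x‖ ^ 2) := by
      rw [hsplit]
      have h2' : Real.exp (-2 * ω * τ) * (M'' * ‖x‖ ^ 2)
          ≤ Real.exp (-ω * τ) * (M'' * ‖x‖ ^ 2) := by
        apply mul_le_mul_of_nonneg_right hexp (by positivity)
      linarith [htail, hfront]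
    calc ‖x‖ ^ 2 ≤ M * ∫ t in Set.Ioi (0:ℝ), g t := hx1
      _ ≤ _ := by nlinarith
  rw [hival, hc, div_mul_eq_mul_div, div_le_iff₀ hM]
  nlinarith [hkey]
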